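/- The field extension ℂ(k₁ + k₂, k₁k₂, ε_A, ε_A k₂ + ε_B k₁) ⊆ ℂ(k₁, k₂, ε_A, ε_B) has degree 2. -/
import Mathlib


open MvPolynomial

set_option maxHeartbeats 800000
set_option synthInstance.maxHeartbeats 1000000

noncomputable abbrev K9 : Type := FractionRing (MvPolynomial (Fin 4) ℂ)

noncomputable def k₁ : K9 := algebraMap (MvPolynomial (Fin 4) ℂ) K9 (X 0)
noncomputable def k₂ : K9 := algebraMap (MvPolynomial (Fin 4) ℂ) K9 (X 1)
noncomputable def εA : K9 := algebraMap (MvPolynomial (Fin 4) ℂ) K9 (X 2)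
noncomputable def εB : K9 := algebraMap (MvPolynomial (Fin 4) ℂ) K9 (X 3)

/-- The subfield ℂ(k₁+k₂, k₁k₂, ε_A, ε_Ak₂+ε_Bk₁) of ℂ(k₁,k₂,ε_A,ε_B). -/
noncomputable def F9 : Subfield K9 :=
  Subfield.closure
    ((Set.range (algebraMap ℂ K9)) ∪ {k₁ + k₂, k₁ * k₂, εA, εA * k₂ + εB * k₁})

set_option maxHeartbeats 1000000 in
abbrev R9 : Type := MvPolynomial (Fin 4) ℂ

lemma injRK : Function.Injective (algebraMap R9 K9) := IsFractionRing.injective _ _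

lemma k1_ne_zero : k₁ ≠ 0 := by
  simp [k₁, map_eq_zero_iff _ injRK, MvPolynomial.X_ne_zero]

lemma k2_ne_zero : k₂ ≠ 0 := by
  simp [k₂, map_eq_zero_iff _ injRK, MvPolynomial.X_ne_zero]

lemma k1_ne_k2 : k₁ ≠ k₂ := by
  intro h
  have := injRK h
  have : (0 : Fin 4) = 1 := by
    simpa using (MvPolynomial.X_injective (R := ℂ)) this
  simp at this

noncomputable abbrev w9 : R9 := X 0 * X 1

lemma w9_ne_zero : w9 ≠ 0 := by
  simp [MvPolynomial.X_ne_zero]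

abbrev A9 : Type := Localization.Away w9

noncomputable def f0 : R9 →+* A9 := algebraMap R9 A9

lemma huw : IsUnit (f0 w9) := IsLocalization.Away.algebraMap_isUnit w9

lemma h0unit : IsUnit (f0 (X 0)) := isUnit_of_mul_isUnit_left (y := f0 (X 1)) (by rw [← map_mul]; exact huw)

lemma h1unit : IsUnit (f0 (X 1)) := isUnit_of_mul_isUnit_right (x := f0 (X 0)) (by rw [← map_mul]; exact huw)

noncomputable def c9 : A9 := ↑h1unit.unit⁻¹

lemma c9_spec : c9 * f0 (X 1) = 1 := by
  have := Units.inv_mul h1unit.unit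
  rwa [h1unit.unit_spec] at this

noncomputable def v9 : Fin 4 → A9 :=
  ![f0 (X 1), f0 (X 0), f0 (X 2),
    (f0 (X 2) * (f0 (X 1) - f0 (X 0)) + f0 (X 3) * f0 (X 0)) * c9]

noncomputable def σ0 : R9 →+* A9 := eval₂Hom (f0.comp (C : ℂ →+* R9)) v9

lemma σ0_X (i : Fin 4) : σ0 (X i) = v9 i := by simp [σ0]

lemma σ0_C (a : ℂ) : σ0 (C a) = f0 (C a) := by simp [σ0]

lemma σ0w_unit : IsUnit (σ0 w9) := by
  have : σ0 w9 = f0 w9 := by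
    rw [map_mul, σ0_X, σ0_X]
    show f0 (X 1) * f0 (X 0) = _
    rw [← map_mul, mul_comm]
  rw [this]; exact huw

noncomputable def σ1 : A9 →+* A9 := Localization.awayLift σ0 w9 σ0w_unit

lemma σ1_f0 (r : R9) : σ1 (f0 r) = σ0 r := IsLocalization.Away.lift_eq w9 σ0w_unit r

noncomputable def z9 : A9 := σ1 c9

lemma z9_spec : z9 * f0 (X 0) = 1 := by
  have h : σ1 (c9 * f0 (X 1)) = σ1 1 := by rw [c9_spec]
  rw [map_mul, map_one, σ1_f0, σ0_X] at h
  exact h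

lemma σ1_fX0 : σ1 (f0 (X 0)) = f0 (X 1) := by rw [σ1_f0, σ0_X]; rfl
lemma σ1_fX1 : σ1 (f0 (X 1)) = f0 (X 0) := by rw [σ1_f0, σ0_X]; rfl
lemma σ1_fX2 : σ1 (f0 (X 2)) = f0 (X 2) := by rw [σ1_f0, σ0_X]; rfl
lemma σ1_fX3 : σ1 (f0 (X 3)) =
    (f0 (X 2) * (f0 (X 1) - f0 (X 0)) + f0 (X 3) * f0 (X 0)) * c9 := by
  rw [σ1_f0, σ0_X]; rfl

lemma σ1_σ1 : σ1.comp σ1 = RingHom.id A9 := by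
  apply IsLocalization.ringHom_ext (Submonoid.powers w9)
  apply MvPolynomial.ringHom_ext
  · intro a
    show σ1 (σ1 (f0 (C a))) = f0 (C a)
    rw [σ1_f0, σ0_C, σ1_f0, σ0_C]
  · intro i
    show σ1 (σ1 (f0 (X i))) = f0 (X i)
    fin_cases i
    · rw [show ((⟨0, by norm_num⟩ : Fin 4)) = 0 from rfl, σ1_fX0, σ1_fX1]
    · rw [show ((⟨1, by norm_num⟩ : Fin 4)) = 1 from rfl, σ1_fX1, σ1_fX0]
    · rw [show ((⟨2, by norm_num⟩ : Fin 4)) = 2 from rfl, σ1_fX2, σ1_fX2]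
    · rw [show ((⟨3, by norm_num⟩ : Fin 4)) = 3 from rfl, σ1_fX3, map_mul, map_add,
        map_mul, map_mul, map_sub, σ1_fX0, σ1_fX1, σ1_fX2, σ1_fX3]
      have hc := c9_spec
      have hz := z9_spec
      show _ * z9 = _
      linear_combination ((f0 (X 2) * (f0 (X 1) - f0 (X 0)) + f0 (X 3) * f0 (X 0)) * z9) * hc
        + f0 (X 3) * hz

lemma σ1_inj : Function.Injective σ1 :=
  Function.LeftInverse.injective (g := σ1) (fun x => RingHom.congr_fun σ1_σ1 x)

lemma wK_unit : IsUnit (algebraMap R9 K9 w9) := by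
  rw [isUnit_iff_ne_zero, Ne, map_eq_zero_iff _ injRK]
  exact w9_ne_zero

noncomputable def liftK : A9 →+* K9 := Localization.awayLift (algebraMap R9 K9) w9 wK_unit

lemma liftK_f0 (r : R9) : liftK (f0 r) = algebraMap R9 K9 r :=
  IsLocalization.Away.lift_eq w9 wK_unit r

lemma f0_inj : Function.Injective f0 :=
  IsLocalization.injective A9
    (powers_le_nonZeroDivisors_of_noZeroDivisors w9_ne_zero)

lemma liftK_inj : Function.Injective liftK := by
  rw [show liftK = IsLocalization.lift (M := Submonoid.powers w9) (g := algebraMap R9 K9) ?_ from rfl,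
    IsLocalization.lift_injective_iff]
  · intro x y
    constructor
    · intro h; rw [f0_inj h]
    · intro h; rw [injRK h]
  · intro y
    obtain ⟨n, hn⟩ := y.2
    rw [← hn, map_pow]
    exact wK_unit.pow n

noncomputable def g9 : R9 →+* K9 := liftK.comp (σ1.comp f0)

lemma g9_inj : Function.Injective g9 := liftK_inj.comp (σ1_inj.comp f0_inj)

noncomputable def σK : K9 →+* K9 := IsFractionRing.lift g9_inj

lemma σK_alg (p : R9) : σK (algebraMap R9 K9 p) = g9 p :=
  IsFractionRing.lift_algebraMap g9_inj p

lemma σK_k1 : σK k₁ = k₂ := by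
  rw [k₁, σK_alg]
  show liftK (σ1 (f0 (X 0))) = k₂
  rw [σ1_fX0, liftK_f0]; rfl

lemma σK_k2 : σK k₂ = k₁ := by
  rw [k₂, σK_alg]
  show liftK (σ1 (f0 (X 1))) = k₁
  rw [σ1_fX1, liftK_f0]; rfl

lemma σK_εA : σK εA = εA := by
  rw [εA, σK_alg]
  show liftK (σ1 (f0 (X 2))) = εA
  rw [σ1_fX2, liftK_f0]; rfl

lemma liftK_c9 : liftK c9 * k₂ = 1 := by
  have := congrArg liftK c9_spec
  rw [map_mul, map_one, liftK_f0] at this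
  exact this

lemma σK_εB : σK εB = (εA * (k₂ - k₁) + εB * k₁) * liftK c9 := by
  rw [εB, σK_alg]
  show liftK (σ1 (f0 (X 3))) = _
  rw [σ1_fX3]
  simp only [map_mul, map_add, map_sub, liftK_f0]
  rfl

lemma σK_const (a : ℂ) : σK (algebraMap ℂ K9 a) = algebraMap ℂ K9 a := by
  have h : algebraMap ℂ K9 a = algebraMap R9 K9 (C a) := by
    rw [IsScalarTower.algebraMap_apply ℂ R9 K9]
    rfl
  rw [h, σK_alg]
  show liftK (σ1 (f0 (C a))) = _
  rw [σ1_f0, σ0_C, liftK_f0]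

lemma σK_s : σK (εA * k₂ + εB * k₁) = εA * k₂ + εB * k₁ := by
  rw [map_add, map_mul, map_mul, σK_k1, σK_k2, σK_εA, σK_εB]
  have hc := liftK_c9
  linear_combination (εA * (k₂ - k₁) + εB * k₁) * hc

noncomputable def Sfix : Subfield K9 where
  carrier := {x | σK x = x}
  zero_mem' := map_zero σK
  one_mem' := map_one σK
  add_mem' := by intro a b ha hb; simp only [Set.mem_setOf_eq, map_add] at *; rw [ha, hb]
  mul_mem' := by intro a b ha hb; simp only [Set.mem_setOf_eq, map_mul] at *; rw [ha, hb]
  neg_mem' := by intro a ha; simp only [Set.mem_setOf_eq, map_neg] at *; rw [ha]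
  inv_mem' := by intro a ha; simp only [Set.mem_setOf_eq, map_inv₀] at *; rw [ha]

lemma F9_le_Sfix : F9 ≤ Sfix := by
  rw [F9]
  apply Subfield.closure_le.mpr
  rintro x (⟨a, rfl⟩ | hx)
  · exact σK_const a
  · simp only [Set.mem_insert_iff, Set.mem_singleton_iff] at hx
    rcases hx with rfl | rfl | rfl | rfl
    · show σK _ = _
      rw [map_add, σK_k1, σK_k2, add_comm]
    · show σK _ = _
      rw [map_mul, σK_k1, σK_k2, mul_comm]
    · exact σK_εA
    · exact σK_s

lemma k1_notMem_F9 : k₁ ∉ F9 := by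
  intro h
  have := F9_le_Sfix h
  have : σK k₁ = k₁ := this
  rw [σK_k1] at this
  exact k1_ne_k2 this.symm

open IntermediateField

lemma e1_mem : k₁ + k₂ ∈ F9 := Subfield.subset_closure (Or.inr (by simp))
lemma e2_mem : k₁ * k₂ ∈ F9 := Subfield.subset_closure (Or.inr (by simp))
lemma eA_mem : εA ∈ F9 := Subfield.subset_closure (Or.inr (by simp))
lemma s_mem : εA * k₂ + εB * k₁ ∈ F9 := Subfield.subset_closure (Or.inr (by simp))
lemma const_mem (a : ℂ) : algebraMap ℂ K9 a ∈ F9 := Subfield.subset_closure (Or.inl ⟨a, rfl⟩)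

lemma coe_F9 (x : F9) : algebraMap F9 K9 x = (x : K9) := rfl

noncomputable def E9 : IntermediateField F9 K9 := F9⟮k₁⟯

lemma F9_mem_E9 {x : K9} (hx : x ∈ F9) : x ∈ E9 := E9.algebraMap_mem ⟨x, hx⟩

lemma k1_mem_E9 : k₁ ∈ E9 := IntermediateField.mem_adjoin_simple_self F9 k₁

lemma k2_mem_E9 : k₂ ∈ E9 := by
  have : k₂ = (k₁ + k₂) - k₁ := by ring
  rw [this]
  exact sub_mem (F9_mem_E9 e1_mem) k1_mem_E9

lemma eA_mem_E9 : εA ∈ E9 := F9_mem_E9 eA_mem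

lemma eB_mem_E9 : εB ∈ E9 := by
  have h : εB = ((εA * k₂ + εB * k₁) - εA * k₂) * k₁⁻¹ := by
    rw [add_sub_cancel_left, mul_assoc, mul_inv_cancel₀ k1_ne_zero, mul_one]
  rw [h]
  exact mul_mem (sub_mem (F9_mem_E9 s_mem) (mul_mem eA_mem_E9 k2_mem_E9))
    (inv_mem k1_mem_E9)

lemma poly_mem_E9 (p : R9) : algebraMap R9 K9 p ∈ E9 := by
  induction p using MvPolynomial.induction_on with
  | C a =>
    have h : algebraMap R9 K9 (C a) = algebraMap ℂ K9 a := by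
      rw [IsScalarTower.algebraMap_apply ℂ R9 K9]; rfl
    rw [h]
    exact F9_mem_E9 (const_mem a)
  | add p q hp hq => rw [map_add]; exact add_mem hp hq
  | mul_X p i hp =>
    rw [map_mul]
    refine mul_mem hp ?_
    fin_cases i
    · exact k1_mem_E9
    · exact k2_mem_E9
    · exact eA_mem_E9
    · exact eB_mem_E9

lemma E9_eq_top : E9 = ⊤ := by
  rw [eq_top_iff]
  intro x _
  obtain ⟨p, q, hq, hx⟩ := IsFractionRing.div_surjective (A := R9) x
  rw [← hx]
  exact div_mem (poly_mem_E9 p) (poly_mem_E9 q)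

noncomputable def e1' : F9 := ⟨k₁ + k₂, e1_mem⟩
noncomputable def e2' : F9 := ⟨k₁ * k₂, e2_mem⟩

noncomputable def P9 : Polynomial F9 :=
  Polynomial.X ^ 2 + (Polynomial.C (-e1') * Polynomial.X + Polynomial.C e2')

lemma P9_monic : P9.Monic := by
  apply Polynomial.monic_X_pow_add
  exact lt_of_le_of_lt Polynomial.degree_linear_le (by norm_num)

lemma P9_natDegree_le : P9.natDegree ≤ 2 := by
  unfold P9
  compute_degree

lemma P9_root : Polynomial.aeval k₁ P9 = 0 := by
  unfold P9
  simp only [map_add, map_mul, map_pow, Polynomial.aeval_X, Polynomial.aeval_C, map_neg]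
  rw [coe_F9, coe_F9]
  show k₁ ^ 2 + (-(k₁ + k₂) * k₁ + k₁ * k₂) = 0
  ring

lemma k1_integral : IsIntegral F9 k₁ := ⟨P9, P9_monic, by
  rw [← Polynomial.aeval_def]; exact P9_root⟩

lemma minpoly_natDegree : (minpoly F9 k₁).natDegree = 2 := by
  have hdvd : minpoly F9 k₁ ∣ P9 := minpoly.dvd F9 k₁ P9_root
  have hle : (minpoly F9 k₁).natDegree ≤ 2 :=
    le_trans (Polynomial.natDegree_le_of_dvd hdvd P9_monic.ne_zero) P9_natDegree_le
  have hge : 2 ≤ (minpoly F9 k₁).natDegree := by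
    rw [minpoly.two_le_natDegree_iff k1_integral]
    rintro ⟨y, hy⟩
    exact k1_notMem_F9 (hy ▸ y.2)
  omega

/-- The extension ℂ(k₁+k₂, k₁k₂, ε_A, ε_Ak₂+ε_Bk₁) ⊆ ℂ(k₁,k₂,ε_A,ε_B) has degree 2. -/
theorem degree_two_extension : Module.finrank F9 K9 = 2 := by
  have h2 : F9⟮k₁⟯ = (⊤ : IntermediateField F9 K9) := E9_eq_top
  have h1 : Module.finrank F9 K9 = (minpoly F9 k₁).natDegree := by
    rw [← IntermediateField.adjoin.finrank k1_integral, h2, IntermediateField.finrank_top']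
  rw [h1, minpoly_natDegree]
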